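/- arXiv:2404.01719 — 4 statements merged into one kernel-verified Lean document; each statement's English description precedes it below -/
import Mathlib

section
/- In the truncated polynomial ring F[s,t]/(s^{p-1}, t^{p-1}) over a field F of characteristic p > 2, for every degree d ≥ p-1, every homogeneous polynomial of degree d lies in the image of multiplication by the element s + t + st restricted to the span of homogeneous components of degree ≥ d-1. -/
open MvPolynomial

/-- The quotient map onto `F[s,t]/(s^{p-1}, t^{p-1})`. -/
noncomputable def mkq (F : Type*) [Field F] (p : ℕ) :
    MvPolynomial (Fin 2) F →+*
      MvPolynomial (Fin 2) F ⧸
        (Ideal.span {(X 0 : MvPolynomial (Fin 2) F) ^ (p - 1), (X 1) ^ (p - 1)}) :=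
  Ideal.Quotient.mk _

lemma aux_mono {Q : Type*} [CommRing Q] {F : Type*} [Field F] [Algebra F Q]
    (s t : Q) {c c' : ℕ} (h : c ≤ c') :
    (Submodule.span F {x | ∃ i j : ℕ, c' ≤ i + j ∧ x = s ^ i * t ^ j}) ≤
      Submodule.span F {x | ∃ i j : ℕ, c ≤ i + j ∧ x = s ^ i * t ^ j} := by
  apply Submodule.span_mono
  rintro x ⟨i, j, hij, rfl⟩
  exact ⟨i, j, le_trans h hij, rfl⟩

lemma aux_key {F : Type*} [Field F] {Q : Type*} [CommRing Q] [Algebra F Q]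
    (p : ℕ) (h2 : 2 < p) (s t : Q) (hs : s ^ (p - 1) = 0) (ht : t ^ (p - 1) = 0) :
    ∀ (n a b : ℕ), (p - 2 - a) + (2 * p - 4 - (a + b)) ≤ n → p - 1 ≤ a + b →
      s ^ a * t ^ b ∈ Submodule.map (LinearMap.mulLeft F (s + t + s * t))
        (Submodule.span F {x | ∃ i j : ℕ, a + b - 1 ≤ i + j ∧ x = s ^ i * t ^ j}) := by
  intro n
  induction n with
  | zero =>
    intro a b hm hab
    by_cases ha : p - 1 ≤ a
    · have hz : s ^ a = 0 := by
        rw [show a = (p - 1) + (a - (p - 1)) by omega, pow_add, hs, zero_mul]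
      rw [hz, zero_mul]; exact Submodule.zero_mem _
    by_cases hb : p - 1 ≤ b
    · have hz : t ^ b = 0 := by
        rw [show b = (p - 1) + (b - (p - 1)) by omega, pow_add, ht, zero_mul]
      rw [hz, mul_zero]; exact Submodule.zero_mem _
    have hap : a = p - 2 := by omega
    obtain ⟨c, rfl⟩ : ∃ c, b = c + 1 := ⟨b - 1, by omega⟩
    refine ⟨s ^ a * t ^ c, Submodule.subset_span ⟨a, c, by omega, rfl⟩, ?_⟩
    show (s + t + s * t) * (s ^ a * t ^ c) = s ^ a * t ^ (c + 1)
    have hs' : s ^ (a + 1) = 0 := by rwa [show a + 1 = p - 1 by omega]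
    linear_combination (t ^ c + t ^ (c + 1)) * hs'
  | succ n ih =>
    intro a b hm hab
    by_cases ha : p - 1 ≤ a
    · have hz : s ^ a = 0 := by
        rw [show a = (p - 1) + (a - (p - 1)) by omega, pow_add, hs, zero_mul]
      rw [hz, zero_mul]; exact Submodule.zero_mem _
    by_cases hb : p - 1 ≤ b
    · have hz : t ^ b = 0 := by
        rw [show b = (p - 1) + (b - (p - 1)) by omega, pow_add, ht, zero_mul]
      rw [hz, mul_zero]; exact Submodule.zero_mem _
    by_cases hap : a = p - 2
    · obtain ⟨c, rfl⟩ : ∃ c, b = c + 1 := ⟨b - 1, by omega⟩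
      refine ⟨s ^ a * t ^ c, Submodule.subset_span ⟨a, c, by omega, rfl⟩, ?_⟩
      show (s + t + s * t) * (s ^ a * t ^ c) = s ^ a * t ^ (c + 1)
      have hs' : s ^ (a + 1) = 0 := by rwa [show a + 1 = p - 1 by omega]
      linear_combination (t ^ c + t ^ (c + 1)) * hs'
    · have ha3 : a ≤ p - 3 := by omega
      obtain ⟨c, rfl⟩ : ∃ c, b = c + 1 := ⟨b - 1, by omega⟩
      have hA : (s + t + s * t) * (s ^ a * t ^ c) ∈
          Submodule.map (LinearMap.mulLeft F (s + t + s * t))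
            (Submodule.span F {x | ∃ i j : ℕ, a + (c + 1) - 1 ≤ i + j ∧ x = s ^ i * t ^ j}) :=
        ⟨s ^ a * t ^ c, Submodule.subset_span ⟨a, c, by omega, rfl⟩, rfl⟩
      have hB := ih (a + 1) c (by omega) (by omega)
      have hC := ih (a + 1) (c + 1) (by omega) (by omega)
      rw [show (a + 1) + c - 1 = a + (c + 1) - 1 by omega] at hB
      have hC' : s ^ (a + 1) * t ^ (c + 1) ∈
          Submodule.map (LinearMap.mulLeft F (s + t + s * t))
            (Submodule.span F {x | ∃ i j : ℕ, a + (c + 1) - 1 ≤ i + j ∧ x = s ^ i * t ^ j}) :=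
        Submodule.map_mono (aux_mono s t (show a + (c + 1) - 1 ≤ (a + 1) + (c + 1) - 1 by omega)) hC
      have hEq : s ^ a * t ^ (c + 1) = (s + t + s * t) * (s ^ a * t ^ c)
          - s ^ (a + 1) * t ^ c - s ^ (a + 1) * t ^ (c + 1) := by ring
      rw [hEq]
      exact Submodule.sub_mem _ (Submodule.sub_mem _ hA hB) hC'

set_option synthInstance.maxHeartbeats 400000 in
/-- In `F[s,t]/(s^{p-1},t^{p-1})` with `char F = p > 2`, every homogeneous component of
degree `d ≥ p-1` lies in the image, under multiplication by `s + t + st`, of the span of the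
homogeneous components of degree `≥ d - 1`. -/
theorem stmt_0 (F : Type*) [Field F] (p : ℕ) (hp : p.Prime) [CharP F p] (h2 : 2 < p)
    (d : ℕ) (hd : p - 1 ≤ d) :
    Submodule.span F
        {x | ∃ i j : ℕ, i + j = d ∧ x = mkq F p ((X 0) ^ i * (X 1) ^ j)} ≤
      Submodule.map
        (LinearMap.mulLeft F (mkq F p (X 0 + X 1 + X 0 * X 1)))
        (Submodule.span F
          {x | ∃ i j : ℕ, d - 1 ≤ i + j ∧ x = mkq F p ((X 0) ^ i * (X 1) ^ j)}) := by
  have hs : (mkq F p (X 0)) ^ (p - 1) = 0 := by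
    rw [← map_pow]
    exact Ideal.Quotient.eq_zero_iff_mem.mpr (Ideal.subset_span (by simp))
  have ht : (mkq F p (X 1)) ^ (p - 1) = 0 := by
    rw [← map_pow]
    exact Ideal.Quotient.eq_zero_iff_mem.mpr (Ideal.subset_span (by simp))
  rw [Submodule.span_le]
  rintro x ⟨i, j, hij, rfl⟩
  simp only [map_mul, map_pow, map_add]
  have := aux_key (F := F) p h2 (mkq F p (X 0)) (mkq F p (X 1)) hs ht
    ((p - 2 - i) + (2 * p - 4 - (i + j))) i j le_rfl (by omega)
  rw [hij] at this
  simpa only [map_mul, map_pow, map_add, SetLike.mem_coe] using this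
end

section
/- Let V be the (p-1)-dimensional indecomposable F[C_p]-module as above, and λ : V ⊗ V → F a C_p-equivariant linear map. If the associated bilinear form (u,v) ↦ λ(u ⊗ v) is nondegenerate, then λ(v_0 ⊗ v_{p-2}) ≠ 0. -/
open TensorProduct

/-- Let `V` be the `(p-1)`-dimensional indecomposable `F[C_p]`-module with basis
`v_0,…,v_{p-2}`, `σ(v_i) = v_i + v_{i+1}` (with `v_{p-1} = 0`), and `λ : V ⊗ V → F` a
`C_p`-equivariant linear map.  If the associated bilinear form is nondegenerate, then
`λ(v_0 ⊗ v_{p-2}) ≠ 0`. -/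
theorem stmt_4 (F : Type*) [Field F] (p : ℕ) (hp : p.Prime) [CharP F p] (h2 : 2 < p)
    (v : ℕ → (Fin (p - 1) → F))
    (hv : ∀ k, v k = fun (j : Fin (p - 1)) => if (j : ℕ) = k then (1 : F) else 0)
    (σ : (Fin (p - 1) → F) ≃ₗ[F] (Fin (p - 1) → F))
    (hσ : ∀ k, σ (v k) = v k + v (k + 1)) (hord : σ ^ p = 1)
    (lam : ((Fin (p - 1) → F) ⊗[F] (Fin (p - 1) → F)) →ₗ[F] F)
    (hlam : ∀ x y, lam (σ x ⊗ₜ[F] σ y) = lam (x ⊗ₜ[F] y))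
    (hndl : ∀ x, (∀ y, lam (x ⊗ₜ[F] y) = 0) → x = 0)
    (hndr : ∀ y, (∀ x, lam (x ⊗ₜ[F] y) = 0) → y = 0) :
    lam (v 0 ⊗ₜ[F] v (p - 2)) ≠ 0 := by
  intro h0
  have hple : p - 2 < p - 1 := by omega
  set w := v (p - 2) with hw
  have hvp1 : v (p - 1) = 0 := by
    funext j
    rw [hv]
    have hj : (j : ℕ) < p - 1 := j.isLt
    simp only
    rw [if_neg (by omega)]
    rfl
  have hσw : σ w = w := by
    have h := hσ (p - 2)
    rw [show p - 2 + 1 = p - 1 by omega, hvp1, add_zero] at h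
    exact h
  have h1 : ∀ k, lam (v (k + 1) ⊗ₜ[F] w) = 0 := by
    intro k
    have h := hlam (v k) w
    rw [hσw, hσ k, add_tmul, map_add] at h
    exact add_eq_left.mp h
  have hall : ∀ j : Fin (p - 1), lam (v (j : ℕ) ⊗ₜ[F] w) = 0 := by
    intro j
    rcases Nat.eq_zero_or_pos (j : ℕ) with h | h
    · rw [h]; exact h0
    · obtain ⟨k, hk⟩ : ∃ k, (j : ℕ) = k + 1 := ⟨(j : ℕ) - 1, by omega⟩
      rw [hk]; exact h1 k
  have hx : ∀ x : Fin (p - 1) → F, lam (x ⊗ₜ[F] w) = 0 := by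
    intro x
    have hxe : x = ∑ j : Fin (p - 1), x j • v (j : ℕ) := by
      funext i
      simp only [Finset.sum_apply, Pi.smul_apply, hv, smul_eq_mul]
      rw [Finset.sum_eq_single i]
      · simp
      · intro b _ hb
        rw [if_neg (fun hbi => hb (Fin.val_injective hbi.symm)), mul_zero]
      · intro hi; exact absurd (Finset.mem_univ i) hi
    calc lam (x ⊗ₜ[F] w) = lam ((∑ j : Fin (p - 1), x j • v (j : ℕ)) ⊗ₜ[F] w) := by
            rw [← hxe]
      _ = 0 := by
            rw [TensorProduct.sum_tmul, map_sum]
            refine Finset.sum_eq_zero fun j _ => ?_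
            rw [← TensorProduct.smul_tmul', map_smul, hall, smul_zero]
  have hw0 := hndr w hx
  have h1' : w ⟨p - 2, hple⟩ = 0 := by rw [hw0]; rfl
  rw [hw, hv] at h1'
  simp at h1'
end

section
/- Let A be an algebra over F of characteristic p > 2 with automorphism σ of order dividing p and δ = σ - 1. Then for x ∈ ker δ and y ∈ ker δ ∩ im δ^{p-2}, the product xy lies in ker δ ∩ im δ^{p-2}; moreover (ker δ ∩ im δ)(ker δ ∩ im δ^{p-2}) ⊆ im δ^{p-1} and (ker δ)(im δ^{p-1}) ⊆ im δ^{p-1}. -/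
set_option maxHeartbeats 1000000 in
/-- Let `A` be an algebra over `F` of characteristic `p > 2` with automorphism `σ` of order
dividing `p` and `δ = σ - 1`.  Then `(ker δ)(ker δ ∩ im δ^{p-2}) ⊆ ker δ ∩ im δ^{p-2}`,
`(ker δ ∩ im δ)(ker δ ∩ im δ^{p-2}) ⊆ im δ^{p-1}` and `(ker δ)(im δ^{p-1}) ⊆ im δ^{p-1}`. -/
theorem stmt_9 (F A : Type*) [Field F] (p : ℕ) (hp : p.Prime) [CharP F p] (h2 : 2 < p)
    [NonUnitalNonAssocRing A] [Module F A] [SMulCommClass F A A] [IsScalarTower F A A]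
    (σ : A ≃ₗ[F] A) (hmul : ∀ x y : A, σ (x * y) = σ x * σ y) (hord : σ ^ p = 1) :
    let δ : A →ₗ[F] A := σ.toLinearMap - LinearMap.id
    (∀ x ∈ LinearMap.ker δ, ∀ y ∈ LinearMap.ker δ ⊓ LinearMap.range (δ ^ (p - 2)),
      x * y ∈ LinearMap.ker δ ⊓ LinearMap.range (δ ^ (p - 2))) ∧
    (∀ x ∈ LinearMap.ker δ ⊓ LinearMap.range δ,
      ∀ y ∈ LinearMap.ker δ ⊓ LinearMap.range (δ ^ (p - 2)),
      x * y ∈ LinearMap.range (δ ^ (p - 1))) ∧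
    (∀ x ∈ LinearMap.ker δ, ∀ y ∈ LinearMap.range (δ ^ (p - 1)),
      x * y ∈ LinearMap.range (δ ^ (p - 1))) := by
  intro δ
  have hδ : ∀ a : A, δ a = σ a - a := fun a => rfl
  have hσδ : ∀ a : A, δ (σ a) = σ (δ a) := by
    intro a; rw [hδ, hδ, map_sub]
  have hδnσ : ∀ (n : ℕ) (a : A), (δ ^ n) (σ a) = σ ((δ ^ n) a) := by
    intro n
    induction n with
    | zero => intro a; simp
    | succ n ih =>
      intro a
      rw [pow_succ, Module.End.mul_apply, Module.End.mul_apply, hσδ, ih]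
  have hδmul : ∀ a b : A, δ (a * b) = δ a * σ b + a * δ b := by
    intro a b
    rw [hδ, hδ, hδ, hmul, sub_mul, mul_sub]
    abel
  have hA : ∀ a : A, δ a = 0 → ∀ (n : ℕ) (b : A), (δ ^ n) (a * b) = a * (δ ^ n) b := by
    intro a ha n
    induction n with
    | zero => intro b; simp
    | succ n ih =>
      intro b
      rw [pow_succ, Module.End.mul_apply, Module.End.mul_apply, hδmul, ha, zero_mul, zero_add,
        ih]
  have hB : ∀ u : A, δ (δ u) = 0 → ∀ (n : ℕ) (v : A),
      (δ ^ (n + 1)) (u * v) = u * (δ ^ (n + 1)) v + (n + 1) • (δ u * σ ((δ ^ n) v)) := by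
    intro u hu n
    induction n with
    | zero =>
      intro v
      rw [zero_add, pow_one, pow_zero, Module.End.one_apply, one_smul, hδmul, add_comm]
    | succ n ih =>
      intro v
      calc (δ ^ (n + 2)) (u * v) = (δ ^ (n + 1)) (δ (u * v)) := by
            rw [pow_succ, Module.End.mul_apply]
        _ = (δ ^ (n + 1)) (δ u * σ v) + (δ ^ (n + 1)) (u * δ v) := by
            rw [hδmul, map_add]
        _ = δ u * σ ((δ ^ (n + 1)) v) + (u * (δ ^ (n + 1)) (δ v)
              + (n + 1) • (δ u * σ ((δ ^ n) (δ v)))) := by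
            rw [hA (δ u) hu, ih, hδnσ]
        _ = u * (δ ^ (n + 2)) v + (n + 2) • (δ u * σ ((δ ^ (n + 1)) v)) := by
            have e1 : (δ ^ (n + 1)) (δ v) = (δ ^ (n + 2)) v := by
              conv_rhs => rw [pow_succ, Module.End.mul_apply]
            have e2 : (δ ^ n) (δ v) = (δ ^ (n + 1)) v := by
              conv_rhs => rw [pow_succ, Module.End.mul_apply]
            rw [e1, e2, succ_nsmul (δ u * σ ((δ ^ (n + 1)) v)) (n + 1),
              add_comm (δ u * σ ((δ ^ (n + 1)) v)), add_assoc]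
  refine ⟨?_, ?_, ?_⟩
  · rintro x hx y ⟨hy, v, hv⟩
    refine ⟨?_, x * v, ?_⟩
    · have hx' : δ x = 0 := hx
      have hy' : δ y = 0 := hy
      show δ (x * y) = 0
      rw [hδmul, hx', hy', zero_mul, mul_zero, add_zero]
    · rw [hA x hx (p - 2) v, hv]
  · rintro x ⟨hx, u, hu⟩ y ⟨hy, v, hv⟩
    have hu2 : δ (δ u) = 0 := by rw [hu]; exact hx
    have hkey := hB u hu2 (p - 2) v
    have hp21 : p - 2 + 1 = p - 1 := by omega
    have hσy : σ y = y := by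
      have h : σ y - y = 0 := hy
      exact sub_eq_zero.mp h
    have h1 : (δ ^ (p - 2 + 1)) v = 0 := by
      rw [pow_succ', Module.End.mul_apply]
      have : δ ((δ ^ (p - 2)) v) = δ y := by rw [hv]
      rw [this]; exact hy
    rw [h1, hv, hσy, hu, mul_zero, zero_add, hp21] at hkey
    have hc : ((p - 1 : ℕ) : F) = -1 := by
      have hz : ((p : ℕ) : F) = 0 := CharP.cast_eq_zero F p
      rw [Nat.cast_sub (by omega : 1 ≤ p), hz]
      ring
    have hsmul : (p - 1) • (x * y) = -(x * y) := by
      rw [← Nat.cast_smul_eq_nsmul F, hc, neg_one_smul]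
    rw [hsmul] at hkey
    exact ⟨-(u * v), by rw [map_neg, hkey, neg_neg]⟩
  · rintro x hx y ⟨v, hv⟩
    exact ⟨x * v, by rw [hA x hx (p - 1) v, hv]⟩
end

section
/- Over an algebraically closed field F of characteristic 5, let O be the Cayley (octonion) algebra with standard orthonormal basis e_0 = 1, e_1, ..., e_7 and multiplication e_i e_{i+1} = e_{i+3} (and cyclically, indices mod 7 on {1,...,7}), e_i^2 = -1 for i ≥ 1. Define the para-Hurwitz product x • y = x̄ ȳ, and operators l_x(y) = x • y, r_x(y) = y • x. Then the operator ρ = l_{e_3 - e_4} ∘ r_{e_4 - e_5} ∘ l_{e_5 - e_6} ∘ r_{e_6 - e_7} on O satisfies (ρ - id)^4 = 0 and (ρ - id)^3 ≠ 0, and its Jordan canonical form consists of exactly two Jordan blocks of size 4 for the eigenvalue 1. -/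
/-- The seven lines of the Fano plane encoding the octonion multiplication rule
`e_i e_{i+1} = e_{i+3}` (and cyclically), indices mod 7 on `{1,…,7}`. -/
def octLines : List (Fin 8 × Fin 8 × Fin 8) :=
  [(1, 2, 4), (2, 3, 5), (3, 4, 6), (4, 5, 7), (5, 6, 1), (6, 7, 2), (7, 1, 3)]

/-- The product of basis octonions: `e_i e_j = s • e_k` is encoded as `(s, k)`. -/
def octBasisMul (i j : Fin 8) : ℤ × Fin 8 :=
  if i = 0 then (1, j)
  else if j = 0 then (1, i)
  else if i = j then (-1, 0)
  else
    match octLines.find? (fun x =>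
        (x.1 == i && x.2.1 == j) || (x.2.1 == i && x.2.2 == j) || (x.2.2 == i && x.1 == j)) with
    | some x => (1, if x.1 = i then x.2.2 else if x.2.1 = i then x.1 else x.2.1)
    | none =>
      match octLines.find? (fun x =>
          (x.1 == j && x.2.1 == i) || (x.2.1 == j && x.2.2 == i) || (x.2.2 == j && x.1 == i)) with
      | some x => (-1, if x.1 = j then x.2.2 else if x.2.1 = j then x.1 else x.2.1)
      | none => (0, 0)

/-- The multiplication of the Cayley (octonion) algebra `O = F^8`, in the standard
orthonormal basis `e_0 = 1, e_1, …, e_7`. -/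
def octMulF (F : Type*) [Field F] (x y : Fin 8 → F) : Fin 8 → F :=
  fun k => ∑ i : Fin 8, ∑ j : Fin 8,
    x i * y j * (if (octBasisMul i j).2 = k then ((octBasisMul i j).1 : F) else 0)

/-- The canonical involution (conjugation) of the octonions: it fixes `e_0` and negates
`e_1, …, e_7`. -/
def octConj (F : Type*) [Field F] (x : Fin 8 → F) : Fin 8 → F :=
  fun k => if k = 0 then x 0 else - x k

/-- The para-Hurwitz product `x • y = x̄ ȳ`. -/
def paraMul (F : Type*) [Field F] (x y : Fin 8 → F) : Fin 8 → F :=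
  octMulF F (octConj F x) (octConj F y)

/-- Matrix (w.r.t. the standard basis) of left multiplication `l_x` for the para-Hurwitz
product. -/
noncomputable def lMat (F : Type*) [Field F] (x : Fin 8 → F) : Matrix (Fin 8) (Fin 8) F :=
  fun k j => paraMul F x (Pi.single j 1) k

/-- Matrix (w.r.t. the standard basis) of right multiplication `r_x` for the para-Hurwitz
product. -/
noncomputable def rMat (F : Type*) [Field F] (x : Fin 8 → F) : Matrix (Fin 8) (Fin 8) F :=
  fun k j => paraMul F (Pi.single j 1) x k


section Aux

instance : Fact (Nat.Prime 5) := ⟨by norm_num⟩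

def L1z : Matrix (Fin 8) (Fin 8) (ZMod 5) := !![0, 0, 0, 4, 1, 0, 0, 0;
  0, 0, 1, 0, 0, 0, 0, 1;
  0, 4, 0, 0, 0, 1, 0, 0;
  4, 0, 0, 0, 0, 0, 4, 0;
  1, 0, 0, 0, 0, 0, 4, 0;
  0, 0, 4, 0, 0, 0, 0, 1;
  0, 0, 0, 1, 1, 0, 0, 0;
  0, 4, 0, 0, 0, 4, 0, 0]
def R1z : Matrix (Fin 8) (Fin 8) (ZMod 5) := !![0, 0, 0, 0, 4, 1, 0, 0;
  0, 0, 1, 0, 0, 0, 1, 0;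
  0, 4, 0, 4, 0, 0, 0, 0;
  0, 0, 1, 0, 0, 0, 4, 0;
  4, 0, 0, 0, 0, 0, 0, 1;
  1, 0, 0, 0, 0, 0, 0, 1;
  0, 4, 0, 1, 0, 0, 0, 0;
  0, 0, 0, 0, 4, 4, 0, 0]
def L2z : Matrix (Fin 8) (Fin 8) (ZMod 5) := !![0, 0, 0, 0, 0, 4, 1, 0;
  0, 0, 0, 0, 0, 1, 1, 0;
  0, 0, 0, 4, 0, 0, 0, 4;
  0, 0, 1, 0, 1, 0, 0, 0;
  0, 0, 0, 4, 0, 0, 0, 1;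
  4, 4, 0, 0, 0, 0, 0, 0;
  1, 4, 0, 0, 0, 0, 0, 0;
  0, 0, 1, 0, 4, 0, 0, 0]
def R2z : Matrix (Fin 8) (Fin 8) (ZMod 5) := !![0, 0, 0, 0, 0, 0, 4, 1;
  0, 0, 0, 4, 0, 1, 0, 0;
  0, 0, 0, 0, 0, 0, 4, 4;
  0, 1, 0, 0, 1, 0, 0, 0;
  0, 0, 0, 4, 0, 4, 0, 0;
  0, 4, 0, 0, 1, 0, 0, 0;
  4, 0, 1, 0, 0, 0, 0, 0;
  1, 0, 1, 0, 0, 0, 0, 0]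
def Pz : Matrix (Fin 8) (Fin 8) (ZMod 5) := !![1, 0, 0, 0, 0, 0, 0, 0;
  0, 1, 0, 0, 0, 0, 0, 0;
  0, 1, 2, 0, 0, 0, 0, 0;
  0, 4, 2, 4, 0, 0, 0, 0;
  4, 2, 1, 2, 2, 0, 0, 0;
  3, 1, 2, 0, 3, 1, 0, 0;
  4, 3, 4, 2, 2, 0, 1, 0;
  1, 2, 4, 0, 2, 2, 0, 1]
def Pzi : Matrix (Fin 8) (Fin 8) (ZMod 5) := !![1, 0, 0, 0, 0, 0, 0, 0;
  0, 1, 0, 0, 0, 0, 0, 0;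
  0, 2, 3, 0, 0, 0, 0, 0;
  0, 3, 1, 4, 0, 0, 0, 0;
  3, 0, 0, 1, 3, 0, 0, 0;
  3, 0, 4, 2, 1, 1, 0, 0;
  0, 3, 1, 0, 4, 0, 1, 0;
  2, 0, 0, 4, 2, 3, 0, 1]
def Qz : Matrix (Fin 8) (Fin 8) (ZMod 5) := !![1, 0, 0, 3, 4, 3, 4, 1;
  0, 1, 3, 0, 2, 0, 3, 2;
  0, 0, 0, 0, 1, 0, 4, 4;
  0, 0, 0, 1, 3, 0, 2, 0;
  0, 0, 0, 0, 0, 1, 2, 2;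
  0, 0, 1, 0, 0, 0, 0, 2;
  0, 0, 0, 0, 0, 0, 1, 0;
  0, 0, 0, 0, 0, 0, 0, 1]
def Qzi : Matrix (Fin 8) (Fin 8) (ZMod 5) := !![1, 0, 0, 2, 2, 0, 3, 0;
  0, 1, 3, 0, 0, 2, 0, 2;
  0, 0, 0, 0, 0, 1, 0, 3;
  0, 0, 2, 1, 0, 0, 0, 2;
  0, 0, 1, 0, 0, 0, 1, 1;
  0, 0, 0, 0, 1, 0, 3, 3;
  0, 0, 0, 0, 0, 0, 1, 0;
  0, 0, 0, 0, 0, 0, 0, 1]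

/-- the indicator weight for the diagonal rank-6 matrix -/
def wz : Fin 8 → ZMod 5 := fun i => if i.val < 6 then 1 else 0

variable {F : Type*} [Field F] [CharP F 5]

lemma octMulF_map (f : ZMod 5 →+* F) (x y : Fin 8 → ZMod 5) :
    octMulF F (f ∘ x) (f ∘ y) = f ∘ octMulF (ZMod 5) x y := by
  funext k
  simp only [octMulF, Function.comp_apply, map_sum, map_mul, apply_ite f, map_intCast, map_zero]

lemma octConj_map (f : ZMod 5 →+* F) (x : Fin 8 → ZMod 5) :
    octConj F (f ∘ x) = f ∘ octConj (ZMod 5) x := by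
  funext k
  simp only [octConj, Function.comp_apply, apply_ite f, map_neg]

lemma paraMul_map (f : ZMod 5 →+* F) (x y : Fin 8 → ZMod 5) :
    paraMul F (f ∘ x) (f ∘ y) = f ∘ paraMul (ZMod 5) x y := by
  unfold paraMul
  rw [octConj_map, octConj_map, octMulF_map]

lemma single_map (f : ZMod 5 →+* F) (j : Fin 8) :
    (Pi.single j 1 : Fin 8 → F) = f ∘ (Pi.single j 1 : Fin 8 → ZMod 5) := by
  funext i
  simp only [Function.comp_apply, Pi.single_apply, apply_ite f, map_one, map_zero]

lemma lMat_map (f : ZMod 5 →+* F) (x : Fin 8 → ZMod 5) :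
    lMat F (f ∘ x) = (lMat (ZMod 5) x).map f := by
  ext k j
  show paraMul F (f ∘ x) (Pi.single j 1) k = f (paraMul (ZMod 5) x (Pi.single j 1) k)
  rw [single_map f j, paraMul_map]
  rfl

lemma rMat_map (f : ZMod 5 →+* F) (x : Fin 8 → ZMod 5) :
    rMat F (f ∘ x) = (rMat (ZMod 5) x).map f := by
  ext k j
  show paraMul F (Pi.single j 1) (f ∘ x) k = f (paraMul (ZMod 5) (Pi.single j 1) x k)
  rw [single_map f j, paraMul_map]
  rfl

lemma diff_map (f : ZMod 5 →+* F) (a b : Fin 8) :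
    (Pi.single a 1 - Pi.single b 1 : Fin 8 → F)
      = f ∘ (Pi.single a 1 - Pi.single b 1 : Fin 8 → ZMod 5) := by
  funext i
  simp only [Pi.sub_apply, Function.comp_apply, map_sub, Pi.single_apply, apply_ite f,
    map_one, map_zero]

lemma hL1z : lMat (ZMod 5) (Pi.single 3 1 - Pi.single 4 1) = L1z := by decide
lemma hR1z : rMat (ZMod 5) (Pi.single 4 1 - Pi.single 5 1) = R1z := by decide
lemma hL2z : lMat (ZMod 5) (Pi.single 5 1 - Pi.single 6 1) = L2z := by decide
lemma hR2z : rMat (ZMod 5) (Pi.single 6 1 - Pi.single 7 1) = R2z := by decide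

def Az : Matrix (Fin 8) (Fin 8) (ZMod 5) := L1z * R1z * L2z * R2z - 1

lemma hA4 : Az ^ 4 = 0 := by decide
lemma hA3 : (Az ^ 3) 0 2 = 3 := by decide
lemma hPAQ : Pz * Az * Qz = Matrix.diagonal wz := by decide
lemma hPPi : Pz * Pzi = 1 := by decide
lemma hPiP : Pzi * Pz = 1 := by decide
lemma hQQi : Qz * Qzi = 1 := by decide
lemma hQiQ : Qzi * Qz = 1 := by decide
lemma hwcard : Fintype.card {i : Fin 8 // wz i ≠ 0} = 6 := by decide

end Aux

/-- Over an algebraically closed field of characteristic `5`, the operator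
`ρ = l_{e_3-e_4} ∘ r_{e_4-e_5} ∘ l_{e_5-e_6} ∘ r_{e_6-e_7}` on the octonions satisfies
`(ρ-1)^4 = 0`, `(ρ-1)^3 ≠ 0`, and its Jordan form consists of exactly two Jordan blocks of
size `4` for the eigenvalue `1` (equivalently, `rank (ρ-1) = 6` on the `8`-dimensional
space). -/


theorem stmt_11 (F : Type*) [Field F] [IsAlgClosed F] [CharP F 5] :
    let e : Fin 8 → (Fin 8 → F) := fun i => Pi.single i 1
    let ρ : Matrix (Fin 8) (Fin 8) F :=
      lMat F (e 3 - e 4) * rMat F (e 4 - e 5) * lMat F (e 5 - e 6) * rMat F (e 6 - e 7)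
    (ρ - 1) ^ 4 = 0 ∧ (ρ - 1) ^ 3 ≠ 0 ∧ (ρ - 1).rank = 6 := by
  classical
  intro e ρ
  have : (5 : ℕ) ∣ 5 := dvd_refl 5
  set f : ZMod 5 →+* F := ZMod.castHom this F with hf
  have hfinj : Function.Injective f := f.injective
  have hρ : ρ - 1 = f.mapMatrix Az := by
    show lMat F (e 3 - e 4) * rMat F (e 4 - e 5) * lMat F (e 5 - e 6) * rMat F (e 6 - e 7) - 1
      = f.mapMatrix Az
    have h1 : lMat F (e 3 - e 4) = f.mapMatrix L1z := by
      show lMat F (Pi.single 3 1 - Pi.single 4 1) = _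
      rw [diff_map f, lMat_map, hL1z]; rfl
    have h2 : rMat F (e 4 - e 5) = f.mapMatrix R1z := by
      show rMat F (Pi.single 4 1 - Pi.single 5 1) = _
      rw [diff_map f, rMat_map, hR1z]; rfl
    have h3 : lMat F (e 5 - e 6) = f.mapMatrix L2z := by
      show lMat F (Pi.single 5 1 - Pi.single 6 1) = _
      rw [diff_map f, lMat_map, hL2z]; rfl
    have h4 : rMat F (e 6 - e 7) = f.mapMatrix R2z := by
      show rMat F (Pi.single 6 1 - Pi.single 7 1) = _
      rw [diff_map f, rMat_map, hR2z]; rfl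
    rw [h1, h2, h3, h4, ← map_mul, ← map_mul, ← map_mul, Az, map_sub, map_one]
  refine ⟨?_, ?_, ?_⟩
  · rw [hρ, ← map_pow, hA4, map_zero]
  · rw [hρ, ← map_pow]
    intro h
    have h02 : f ((Az ^ 3) 0 2) = 0 := by
      have := congrFun (congrFun h 0) 2
      exact this
    rw [hA3] at h02
    exact (hfinj.ne_iff' (map_zero f)).mpr (by decide) h02
  · have hPu : IsUnit (f.mapMatrix Pz).det :=
      Matrix.isUnit_det_of_left_inverse (B := f.mapMatrix Pzi)
        (by rw [← map_mul, hPiP, map_one])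
    have hQu : IsUnit (f.mapMatrix Qz).det :=
      Matrix.isUnit_det_of_left_inverse (B := f.mapMatrix Qzi)
        (by rw [← map_mul, hQiQ, map_one])
    have key : f.mapMatrix Pz * (ρ - 1) * f.mapMatrix Qz
        = (Matrix.diagonal wz).map f := by
      rw [hρ, ← map_mul, ← map_mul, hPAQ]; rfl
    have hr1 : (f.mapMatrix Pz * (ρ - 1) * f.mapMatrix Qz).rank = (ρ - 1).rank := by
      rw [Matrix.rank_mul_eq_left_of_isUnit_det _ _ hQu,
        Matrix.rank_mul_eq_right_of_isUnit_det _ _ hPu]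
    rw [← hr1, key, Matrix.diagonal_map (map_zero f), Matrix.rank_diagonal]
    rw [← hwcard]
    exact Fintype.card_congr (Equiv.subtypeEquivRight fun i => by
      simp only [Function.comp_apply, ne_eq, ← map_zero f, hfinj.eq_iff])
end
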